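/- For fixed γ ∈ ℝ, the function (a, b) ↦ log(Φ(b − γ) − Φ(a − γ)) is concave on the region {(a,b) : a < b} ⊂ ℝ². -/

import Mathlib

open Real MeasureTheory

/-- Standard normal density. -/
noncomputable def normalPDF (t : ℝ) : ℝ := (Real.sqrt (2 * Real.pi))⁻¹ * Real.exp (-t ^ 2 / 2)

/-- Standard normal CDF `Φ`. -/
noncomputable def normalCDF (t : ℝ) : ℝ := ∫ s in Set.Iic t, normalPDF s

open intervalIntegral

lemma pdf_pos (t : ℝ) : 0 < normalPDF t := by
  unfold normalPDF
  positivity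

lemma pdf_cont : Continuous normalPDF := by
  unfold normalPDF
  continuity

lemma pdf_integrable : Integrable normalPDF := by
  unfold normalPDF
  apply Integrable.const_mul
  have : (fun t : ℝ => Real.exp (-t ^ 2 / 2)) = fun t : ℝ => Real.exp (-(1/2 : ℝ) * t ^ 2) := by
    ext t; ring_nf
  rw [this]
  exact integrable_exp_neg_mul_sq (by norm_num)

lemma pdf_hasDeriv (t : ℝ) : HasDerivAt normalPDF (-t * normalPDF t) t := by
  unfold normalPDF
  have h : HasDerivAt (fun u : ℝ => -u ^ 2 / 2) (-t) t := by
    have := ((hasDerivAt_pow 2 t).neg).div_const 2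
    exact this.congr_deriv (by push_cast; ring)
  have := (h.exp).const_mul (Real.sqrt (2 * Real.pi))⁻¹
  exact this.congr_deriv (by ring)

lemma cdf_sub (x y : ℝ) : normalCDF y - normalCDF x = ∫ t in x..y, normalPDF t := by
  unfold normalCDF
  rw [← intervalIntegral.integral_Iic_sub_Iic pdf_integrable.integrableOn pdf_integrable.integrableOn]

lemma cdf_hasDeriv (t : ℝ) : HasDerivAt normalCDF (normalPDF t) t := by
  have h : normalCDF = fun u => normalCDF 0 + ∫ s in (0:ℝ)..u, normalPDF s := by
    ext u; rw [← cdf_sub]; ring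
  rw [h]
  exact (integral_hasDerivAt_right (pdf_integrable.intervalIntegrable)
    (pdf_cont.stronglyMeasurableAtFilter _ _) pdf_cont.continuousAt).const_add _

lemma int_t_pdf (x y : ℝ) : ∫ t in x..y, t * normalPDF t = normalPDF x - normalPDF y := by
  have h : ∀ t ∈ Set.uIcc x y, HasDerivAt (fun u => -normalPDF u) (t * normalPDF t) t := by
    intro t _
    exact (pdf_hasDeriv t).neg.congr_deriv (by ring)
  rw [integral_eq_sub_of_hasDerivAt h (((continuous_id.mul pdf_cont)).intervalIntegrable x y)]
  ring

lemma S1 {x y : ℝ} (hxy : x ≤ y) : x * ∫ t in x..y, normalPDF t ≤ normalPDF x := by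
  set P := ∫ t in x..y, normalPDF t with hP
  have hPnn : 0 ≤ P := intervalIntegral.integral_nonneg hxy (fun t _ => (pdf_pos t).le)
  rcases le_or_gt x 0 with hx | hx
  · nlinarith [pdf_pos x]
  · have h1 : x * P = ∫ t in x..y, x * normalPDF t := (intervalIntegral.integral_const_mul _ _).symm
    have h2 : (∫ t in x..y, x * normalPDF t) ≤ ∫ t in x..y, t * normalPDF t := by
      apply intervalIntegral.integral_mono_on hxy
      · exact ((continuous_const.mul pdf_cont)).intervalIntegrable x y
      · exact ((continuous_id.mul pdf_cont)).intervalIntegrable x y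
      · intro t ht
        nlinarith [(pdf_pos t).le, ht.1]
    rw [int_t_pdf] at h2
    rw [h1]
    nlinarith [(pdf_pos y).le]

lemma S2 {x y : ℝ} (hxy : x ≤ y) : -normalPDF y ≤ y * ∫ t in x..y, normalPDF t := by
  set P := ∫ t in x..y, normalPDF t with hP
  have hPnn : 0 ≤ P := intervalIntegral.integral_nonneg hxy (fun t _ => (pdf_pos t).le)
  rcases le_or_gt 0 y with hy | hy
  · nlinarith [pdf_pos y]
  · have h1 : -(y * P) = ∫ t in x..y, (-y) * normalPDF t := by
      rw [intervalIntegral.integral_const_mul]; ring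
    have h2 : (∫ t in x..y, (-y) * normalPDF t) ≤ ∫ t in x..y, (-t) * normalPDF t := by
      apply intervalIntegral.integral_mono_on hxy
      · exact ((continuous_const.mul pdf_cont)).intervalIntegrable x y
      · exact (((continuous_id.neg).mul pdf_cont)).intervalIntegrable x y
      · intro t ht
        nlinarith [(pdf_pos t).le, ht.2]
    have h3 : (∫ t in x..y, (-t) * normalPDF t) = normalPDF y - normalPDF x := by
      rw [show (fun t : ℝ => (-t) * normalPDF t) = fun t => -(t * normalPDF t) by ext t; ring]
      rw [intervalIntegral.integral_neg, int_t_pdf]; ring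
    have h1' : (∫ t in x..y, (-y) * normalPDF t) = -(y * P) := by
      rw [intervalIntegral.integral_const_mul, hP]; ring
    rw [h3, h1'] at h2
    linarith [(pdf_pos x).le]

lemma psi_int {x y : ℝ} (hxy : x ≤ y) (h0 : ∀ t ∈ Set.Icc x y, t ≠ 0) :
    ∫ t in x..y, normalPDF t ≤ normalPDF x / x - normalPDF y / y := by
  have huIcc : Set.uIcc x y = Set.Icc x y := Set.uIcc_of_le hxy
  have hderiv : ∀ t ∈ Set.uIcc x y,
      HasDerivAt (fun u => -(normalPDF u / u)) (normalPDF t + normalPDF t / t ^ 2) t := by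
    intro t ht
    have ht0 : t ≠ 0 := h0 t (huIcc ▸ ht)
    have := ((pdf_hasDeriv t).div (hasDerivAt_id t) ht0).neg
    refine this.congr_deriv ?_
    simp only [id]
    field_simp
    ring
  have hcontOn : ContinuousOn (fun t => normalPDF t + normalPDF t / t ^ 2) (Set.uIcc x y) := by
    apply ContinuousOn.add pdf_cont.continuousOn
    apply ContinuousOn.div pdf_cont.continuousOn (continuousOn_pow 2)
    intro t ht
    exact pow_ne_zero 2 (h0 t (huIcc ▸ ht))
  have hint : IntervalIntegrable (fun t => normalPDF t + normalPDF t / t ^ 2) volume x y :=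
    hcontOn.intervalIntegrable
  have heq := integral_eq_sub_of_hasDerivAt hderiv hint
  have hmono : (∫ t in x..y, normalPDF t) ≤ ∫ t in x..y, normalPDF t + normalPDF t / t ^ 2 := by
    apply intervalIntegral.integral_mono_on hxy (pdf_cont.intervalIntegrable x y) hint
    intro t ht
    have ht0 : t ≠ 0 := h0 t ht
    have : 0 < t ^ 2 := by positivity
    have := (pdf_pos t).le
    have : 0 ≤ normalPDF t / t ^ 2 := by positivity
    linarith
  rw [heq] at hmono
  convert hmono using 1
  ring

lemma keyK {x y : ℝ} (hxy : x ≤ y) :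
    x * y * ∫ t in x..y, normalPDF t ≤ y * normalPDF x - x * normalPDF y := by
  set P := ∫ t in x..y, normalPDF t with hP
  have hPnn : 0 ≤ P := intervalIntegral.integral_nonneg hxy (fun t _ => (pdf_pos t).le)
  rcases lt_or_ge 0 x with hx | hx
  · have h0 : ∀ t ∈ Set.Icc x y, t ≠ 0 := fun t ht => (lt_of_lt_of_le hx ht.1).ne'
    have h := psi_int hxy h0
    have hx0 : x ≠ 0 := hx.ne'
    have hy0 : y ≠ 0 := (lt_of_lt_of_le hx hxy).ne'
    have hxy0 : 0 < x * y := mul_pos hx (lt_of_lt_of_le hx hxy)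
    have := mul_le_mul_of_nonneg_left h hxy0.le
    calc x * y * P ≤ x * y * (normalPDF x / x - normalPDF y / y) := this
      _ = y * normalPDF x - x * normalPDF y := by field_simp
  · rcases lt_or_ge y 0 with hy | hy
    · have h0 : ∀ t ∈ Set.Icc x y, t ≠ 0 := fun t ht => (lt_of_le_of_lt ht.2 hy).ne
      have h := psi_int hxy h0
      have hx0 : x ≠ 0 := (lt_of_le_of_lt hxy hy).ne
      have hy0 : y ≠ 0 := hy.ne
      have hxy0 : 0 < x * y := mul_pos_of_neg_of_neg (lt_of_le_of_lt hxy hy) hy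
      have := mul_le_mul_of_nonneg_left h hxy0.le
      calc x * y * P ≤ x * y * (normalPDF x / x - normalPDF y / y) := this
        _ = y * normalPDF x - x * normalPDF y := by field_simp
    · have t1 : 0 ≤ y * normalPDF x := mul_nonneg hy (pdf_pos x).le
      have t2 : x * normalPDF y ≤ 0 := mul_nonpos_of_nonpos_of_nonneg hx (pdf_pos y).le
      have hxy' : x * y ≤ 0 := mul_nonpos_of_nonpos_of_nonneg hx hy
      have t3 : x * y * P ≤ 0 := mul_nonpos_of_nonpos_of_nonneg hxy' hPnn
      linarith

-- Quadratic form / Hessian inequality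
lemma keyQ {x y d1 d2 : ℝ} (hxy : x ≤ y) :
    (d1 ^ 2 * x * normalPDF x - d2 ^ 2 * y * normalPDF y) * (∫ t in x..y, normalPDF t)
      ≤ (d2 * normalPDF y - d1 * normalPDF x) ^ 2 := by
  set P := ∫ t in x..y, normalPDF t with hP
  set u := normalPDF x with hu
  set v := normalPDF y with hv
  have hu0 : 0 < u := pdf_pos x
  have hv0 : 0 < v := pdf_pos y
  have hPnn : 0 ≤ P := intervalIntegral.integral_nonneg hxy (fun t _ => (pdf_pos t).le)
  have hA : 0 ≤ u * (u - x * P) := mul_nonneg hu0.le (by linarith [S1 hxy])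
  have hB : 0 ≤ v * (v + y * P) := mul_nonneg hv0.le (by linarith [S2 hxy])
  have hAB : u ^ 2 * v ^ 2 ≤ (u * (u - x * P)) * (v * (v + y * P)) := by
    have hK := keyK hxy
    have : 0 ≤ P * (y * u - x * v - x * y * P) := mul_nonneg hPnn (by linarith)
    nlinarith [mul_pos hu0 hv0]
  set A := u * (u - x * P)
  set B := v * (v + y * P)
  have h1 : (d1 * d2 * u * v) ^ 2 ≤ (d1 ^ 2 * A) * (d2 ^ 2 * B) := by
    have := mul_le_mul_of_nonneg_left hAB (sq_nonneg (d1 * d2))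
    nlinarith [this]
  have hs : 0 ≤ d1 ^ 2 * A := mul_nonneg (sq_nonneg d1) hA
  have ht : 0 ≤ d2 ^ 2 * B := mul_nonneg (sq_nonneg d2) hB
  have h2 : 2 * (d1 * d2 * u * v) ≤ d1 ^ 2 * A + d2 ^ 2 * B := by
    nlinarith [sq_nonneg (d1 ^ 2 * A - d2 ^ 2 * B), sq_nonneg (d1 ^ 2 * A + d2 ^ 2 * B), h1, hs, ht]
  simp only [A, B] at h2
  nlinarith [h2]

/-- For fixed `γ`, the function `(a, b) ↦ log(Φ(b − γ) − Φ(a − γ))` is concave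
on the region `{(a,b) : a < b} ⊂ ℝ²`. -/
theorem log_prob_concave_in_limits (γ : ℝ) :
    ConcaveOn ℝ {p : ℝ × ℝ | p.1 < p.2}
      (fun p : ℝ × ℝ => Real.log (normalCDF (p.2 - γ) - normalCDF (p.1 - γ))) := by
  constructor
  · intro p hp q hq a b ha hb hab
    simp only [Set.mem_setOf_eq, Prod.fst_add, Prod.snd_add, Prod.smul_fst, Prod.smul_snd,
      smul_eq_mul] at *
    rcases ha.lt_or_eq with ha2 | ha2
    · have hb2 : b = 1 - a := by linarith
      subst hb2
      nlinarith [mul_pos ha2 (sub_pos.mpr hp), mul_nonneg hb (sub_pos.mpr hq).le]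
    · rw [← ha2] at hab ⊢
      simp at hab ⊢
      subst hab
      simpa using hq
  · intro p hp q hq a b ha hb hab
    simp only [Set.mem_setOf_eq] at hp hq
    set x0 := p.1 - γ with hx0
    set y0 := p.2 - γ with hy0
    set d1 := q.1 - p.1 with hd1
    set d2 := q.2 - p.2 with hd2
    set X : ℝ → ℝ := fun t => x0 + t * d1 with hX
    set Y : ℝ → ℝ := fun t => y0 + t * d2 with hY
    set F : ℝ → ℝ := fun t => normalCDF (Y t) - normalCDF (X t) with hF
    set T : Set ℝ := {t | X t < Y t} with hT
    have hTopen : IsOpen T := by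
      apply isOpen_lt
      · exact continuous_const.add (continuous_id.mul continuous_const)
      · exact continuous_const.add (continuous_id.mul continuous_const)
    have hTconv : Convex ℝ T := by
      intro s hs t ht a' b' ha' hb' hab'
      simp only [hT, Set.mem_setOf_eq, hX, hY, smul_eq_mul] at *
      rcases ha'.lt_or_eq with h | h
      · have hb2 : b' = 1 - a' := by linarith
        subst hb2
        nlinarith [mul_pos h (sub_pos.mpr hs), mul_nonneg hb' (sub_pos.mpr ht).le]
      · rw [← h] at hab' ⊢; simp at hab' ⊢; subst hab'; simpa using ht
    -- derivatives
    have hXd : ∀ t : ℝ, HasDerivAt X d1 t := fun t => by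
      exact (((hasDerivAt_id t).mul_const d1).const_add x0).congr_deriv (one_mul d1)
    have hYd : ∀ t : ℝ, HasDerivAt Y d2 t := fun t => by
      exact (((hasDerivAt_id t).mul_const d2).const_add y0).congr_deriv (one_mul d2)
    have hFd : ∀ t : ℝ, HasDerivAt F (d2 * normalPDF (Y t) - d1 * normalPDF (X t)) t := by
      intro t
      have h1 : HasDerivAt (fun t => normalCDF (Y t)) (normalPDF (Y t) * d2) t :=
        (cdf_hasDeriv (Y t)).comp t (hYd t)
      have h2 : HasDerivAt (fun t => normalCDF (X t)) (normalPDF (X t) * d1) t :=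
        (cdf_hasDeriv (X t)).comp t (hXd t)
      have := h1.sub h2
      exact this.congr_deriv (by ring)
    set F' : ℝ → ℝ := fun t => d2 * normalPDF (Y t) - d1 * normalPDF (X t) with hF'
    have hF'd : ∀ t : ℝ, HasDerivAt F'
        (d1 ^ 2 * X t * normalPDF (X t) - d2 ^ 2 * Y t * normalPDF (Y t)) t := by
      intro t
      have h1 : HasDerivAt (fun t => normalPDF (Y t)) (-(Y t) * normalPDF (Y t) * d2) t :=
        (pdf_hasDeriv (Y t)).comp t (hYd t)
      have h2 : HasDerivAt (fun t => normalPDF (X t)) (-(X t) * normalPDF (X t) * d1) t :=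
        (pdf_hasDeriv (X t)).comp t (hXd t)
      have := (h1.const_mul d2).sub (h2.const_mul d1)
      exact this.congr_deriv (by ring)
    have hFpos : ∀ t ∈ T, 0 < F t := by
      intro t ht
      rw [hF]
      simp only
      rw [cdf_sub]
      exact intervalIntegral_pos_of_pos (pdf_cont.intervalIntegrable _ _) pdf_pos ht
    -- concavity of h on T
    set G : ℝ → ℝ := fun t => F' t / F t with hG
    set G' : ℝ → ℝ := fun t =>
      ((d1 ^ 2 * X t * normalPDF (X t) - d2 ^ 2 * Y t * normalPDF (Y t)) * F t
        - F' t * F' t) / (F t) ^ 2 with hG'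
    have hIntT : interior T = T := hTopen.interior_eq
    have hcon : ConcaveOn ℝ T (fun t => Real.log (F t)) := by
      have cdf_cont : Continuous normalCDF :=
        continuous_iff_continuousAt.mpr fun t => (cdf_hasDeriv t).continuousAt
      have hXc : Continuous X := continuous_const.add (continuous_id.mul continuous_const)
      have hYc : Continuous Y := continuous_const.add (continuous_id.mul continuous_const)
      have hFc : Continuous F := (cdf_cont.comp hYc).sub (cdf_cont.comp hXc)
      apply concaveOn_of_hasDerivWithinAt2_nonpos hTconv (f' := G) (f'' := G')
      · exact hFc.continuousOn.log fun t ht => (hFpos t ht).ne'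
      · rw [hIntT]
        intro t ht
        exact (((hFd t).log (hFpos t ht).ne')).hasDerivWithinAt
      · rw [hIntT]
        intro t ht
        exact ((hF'd t).div (hFd t) (hFpos t ht).ne').hasDerivWithinAt
      · rw [hIntT]
        intro t ht
        have hxy : X t ≤ Y t := le_of_lt ht
        have hnum : (d1 ^ 2 * X t * normalPDF (X t) - d2 ^ 2 * Y t * normalPDF (Y t)) * F t
            - F' t * F' t ≤ 0 := by
          have h := keyQ (d1 := d1) (d2 := d2) hxy
          rw [← cdf_sub] at h
          have : F' t * F' t = (d2 * normalPDF (Y t) - d1 * normalPDF (X t)) ^ 2 := by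
            rw [hF']; ring
          rw [this]
          simpa [hF] using sub_nonpos.mpr h
        exact div_nonpos_of_nonpos_of_nonneg hnum (sq_nonneg _)
    -- endpoints
    have h0T : (0 : ℝ) ∈ T := by
      simp only [hT, Set.mem_setOf_eq, hX, hY]; simpa [hx0, hy0] using hp
    have h1T : (1 : ℝ) ∈ T := by
      simp only [hT, Set.mem_setOf_eq, hX, hY, hx0, hy0, hd1, hd2]; ring_nf; linarith
    have hkey := hcon.2 h0T h1T ha hb hab
    simp only [smul_eq_mul, mul_zero, mul_one, zero_add] at hkey
    have e0 : F 0 = normalCDF (p.2 - γ) - normalCDF (p.1 - γ) := by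
      simp [hF, hX, hY, hx0, hy0]
    have e1 : F 1 = normalCDF (q.2 - γ) - normalCDF (q.1 - γ) := by
      show normalCDF (y0 + 1 * d2) - normalCDF (x0 + 1 * d1) = _
      rw [show y0 + 1 * d2 = q.2 - γ by rw [hy0, hd2]; ring,
        show x0 + 1 * d1 = q.1 - γ by rw [hx0, hd1]; ring]
    have eb : F b = normalCDF ((a • p + b • q).2 - γ) - normalCDF ((a • p + b • q).1 - γ) := by
      show normalCDF (y0 + b * d2) - normalCDF (x0 + b * d1) = _
      rw [show y0 + b * d2 = (a • p + b • q).2 - γ by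
          simp only [Prod.snd_add, Prod.smul_snd, smul_eq_mul, hy0, hd2]
          linear_combination (-p.2) * hab,
        show x0 + b * d1 = (a • p + b • q).1 - γ by
          simp only [Prod.fst_add, Prod.smul_fst, smul_eq_mul, hx0, hd1]
          linear_combination (-p.1) * hab]
    rw [e0, e1, eb] at hkey
    simpa [smul_eq_mul] using hkey
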